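/- Let Γ be a group, G = ℤ ≀ Γ, N = ⊕_Γ ℤ. Let Θ be a nontrivial finitely generated subgroup of Γ, and let x ∈ N satisfy supp(x) ⊆ Θ and Σ_{θ∈Θ} x(θ) = 0. Then x ∈ [G,N] and the mixed commutator length of x satisfies cl_{G,N}(x) ≤ rk(Θ), where rk(Θ) is the minimal number of generators of Θ. -/

import Mathlib

open Finsupp

variable (A : Type*) [AddCommGroup A] (Γ : Type*) [Group Γ]

/-- The multiplicative group structure on `AddAut M` used by the older Mathlib. -/
instance addAutGroupOld {M : Type*} [Add M] : Group (AddAut M) where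
  mul g h := AddEquiv.trans h g
  one := AddEquiv.refl _
  inv := AddEquiv.symm
  mul_assoc _ _ _ := rfl
  one_mul _ := rfl
  mul_one _ := rfl
  inv_mul_cancel := AddEquiv.self_trans_symm

@[simp]
theorem addAutOld_mul_apply {M : Type*} [Add M] (e₁ e₂ : AddAut M) (m : M) :
    (e₁ * e₂) m = e₁ (e₂ m) :=
  rfl

@[simp]
theorem addAutOld_one_apply {M : Type*} [Add M] (m : M) : (1 : AddAut M) m = m :=
  rfl

/-- The shift action of `Γ` on `⊕_Γ A`: `(γ • u) x = u (γ⁻¹ * x)`. -/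
noncomputable def shiftHom : Γ →* AddAut (Γ →₀ A) where
  toFun γ := (Finsupp.domCongr (Equiv.mulLeft γ) : (Γ →₀ A) ≃+ (Γ →₀ A))
  map_one' := by
    apply AddEquiv.ext; intro f; ext a
    simp [Finsupp.domCongr_apply, Finsupp.equivMapDomain_apply, Equiv.Perm.one_symm, Equiv.Perm.one_apply]
  map_mul' γ γ' := by
    apply AddEquiv.ext; intro f; ext a
    simp [addAutOld_mul_apply, Finsupp.domCongr_apply, Finsupp.equivMapDomain_apply, Equiv.Perm.mul_apply, mul_assoc]
    rfl

/-- The action of `Γ` on `Multiplicative (⊕_Γ A)` used to build the wreath product. -/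
noncomputable def wreathφ : Γ →* MulAut (Multiplicative (Γ →₀ A)) where
  toFun γ := AddEquiv.toMultiplicative (shiftHom A Γ γ)
  map_one' := by ext x; simp
  map_mul' γ γ' := by ext x; simp

/-- The restricted wreath product `A ≀ Γ = (⊕_Γ A) ⋊ Γ`. -/
noncomputable abbrev Wreath := SemidirectProduct (Multiplicative (Γ →₀ A)) Γ (wreathφ A Γ)

open scoped commutatorElement in
/-- The mixed commutator length `cl_{G,N}` (∞ if not a product of mixed commutators). -/
noncomputable def clGN {G : Type*} [Group G] (N : Subgroup G) (x : G) : ℕ∞ :=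
  sInf {n : ℕ∞ | ∃ k : ℕ, n = k ∧ ∃ g v : Fin k → G, (∀ i, v i ∈ N) ∧
    x = (List.ofFn fun i => ⁅g i, v i⁆).prod}

/-- The rank of a subgroup: minimal size of a generating set. -/
noncomputable def rk {G : Type*} [Group G] (H : Subgroup G) : ℕ∞ :=
  sInf {n : ℕ∞ | ∃ S : Finset G, Subgroup.closure (S : Set G) = H ∧ n = S.card}

/-- The intermediate rank `intrk^Γ(Λ) = inf {rk Θ | Λ ≤ Θ ≤ Γ}`. -/
noncomputable def intrk {G : Type*} [Group G] (Λ : Subgroup G) : ℕ∞ :=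
  sInf {n : ℕ∞ | ∃ Θ : Subgroup G, Λ ≤ Θ ∧ n = rk Θ}

/-- The general rank in the sense of Malcev. -/
noncomputable def genrk (G : Type*) [Group G] : ℕ∞ :=
  sSup {n : ℕ∞ | ∃ Λ : Subgroup G, Λ.FG ∧ n = intrk Λ}

/-- The special rank in the sense of Malcev. -/
noncomputable def sperk (G : Type*) [Group G] : ℕ∞ :=
  sSup {n : ℕ∞ | ∃ Λ : Subgroup G, Λ.FG ∧ n = rk Λ}

open scoped commutatorElement

namespace ClAux

variable {Γ : Type*} [Group Γ]

/-- right translation -/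
noncomputable def rmul (γ : Γ) : (Γ →₀ ℤ) ≃+ (Γ →₀ ℤ) :=
  (Finsupp.domCongr (Equiv.mulRight γ) : (Γ →₀ ℤ) ≃+ (Γ →₀ ℤ))

lemma shiftHom_apply (s : Γ) (a : Γ →₀ ℤ) (b : Γ) :
    shiftHom ℤ Γ s a b = a (s⁻¹ * b) := rfl

lemma rmul_apply (γ : Γ) (a : Γ →₀ ℤ) (b : Γ) : rmul γ a b = a (b * γ⁻¹) := rfl

lemma shift_rmul (s γ : Γ) (a : Γ →₀ ℤ) :
    shiftHom ℤ Γ s (rmul γ a) = rmul γ (shiftHom ℤ Γ s a) := by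
  ext b
  rw [shiftHom_apply, rmul_apply, rmul_apply, shiftHom_apply, mul_assoc]

lemma shift_single (s θ : Γ) (c : ℤ) :
    shiftHom ℤ Γ s (single θ c) = single (s * θ) c := by
  show Finsupp.equivMapDomain (Equiv.mulLeft s) (single θ c) = _
  rw [Finsupp.equivMapDomain_single]; rfl

lemma rmul_single (γ θ : Γ) (c : ℤ) : rmul γ (single θ c) = single (θ * γ) c := by
  show Finsupp.equivMapDomain (Equiv.mulRight γ) (single θ c) = _
  rw [Finsupp.equivMapDomain_single]; rfl

/-- The subgroup of elements representable as `∑_{s ∈ S} (s • a_s - a_s)`. -/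
noncomputable def Msub (S : Finset Γ) : AddSubgroup (Γ →₀ ℤ) where
  carrier := {y | ∃ a : Γ → (Γ →₀ ℤ), y = ∑ s ∈ S, (shiftHom ℤ Γ s (a s) - a s)}
  zero_mem' := ⟨0, by simp⟩
  add_mem' := by
    rintro y z ⟨a, rfl⟩ ⟨b, rfl⟩
    refine ⟨a + b, ?_⟩
    rw [← Finset.sum_add_distrib]
    refine Finset.sum_congr rfl fun s _ => ?_
    simp only [Pi.add_apply, map_add]
    abel
  neg_mem' := by
    rintro y ⟨a, rfl⟩
    refine ⟨-a, ?_⟩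
    rw [← Finset.sum_neg_distrib]
    refine Finset.sum_congr rfl fun s _ => ?_
    simp only [Pi.neg_apply, map_neg]
    abel

lemma Msub_rmul {S : Finset Γ} (γ : Γ) {y : Γ →₀ ℤ} (h : y ∈ Msub S) :
    rmul γ y ∈ Msub S := by
  obtain ⟨a, rfl⟩ := h
  refine ⟨fun s => rmul γ (a s), ?_⟩
  rw [map_sum]
  exact Finset.sum_congr rfl fun s _ => by rw [map_sub, shift_rmul]

lemma single_sub_mem (S : Finset Γ) {θ : Γ}
    (hθ : θ ∈ Subgroup.closure (S : Set Γ)) :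
    (single θ 1 - single 1 1 : Γ →₀ ℤ) ∈ Msub S := by
  induction hθ using Subgroup.closure_induction with
  | mem s hs =>
      classical
      refine ⟨fun t => if t = s then single 1 1 else 0, ?_⟩
      rw [Finset.sum_eq_single s]
      · simp [shift_single]
      · intro t _ hts; simp [hts]
      · intro hs'; exact absurd hs hs'
  | one => simpa using (Msub S).zero_mem
  | mul θ θ' hθ hθ' ih ih' =>
      have : (single (θ * θ') 1 - single 1 1 : Γ →₀ ℤ) =
          rmul θ' (single θ 1 - single 1 1) + (single θ' 1 - single 1 1) := by
        rw [map_sub, rmul_single, rmul_single, one_mul]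
        abel
      rw [this]
      exact add_mem (Msub_rmul θ' ih) ih'
  | inv θ hθ ih =>
      have : (single θ⁻¹ 1 - single 1 1 : Γ →₀ ℤ) =
          -(rmul θ⁻¹ (single θ 1 - single 1 1)) := by
        rw [map_sub, rmul_single, rmul_single, one_mul, mul_inv_cancel]
        abel
      rw [this]
      exact neg_mem (Msub_rmul θ⁻¹ ih)

lemma mem_Msub (S : Finset Γ) (x : Γ →₀ ℤ)
    (hsupp : ∀ θ ∈ x.support, θ ∈ Subgroup.closure (S : Set Γ))
    (hsum : ∑ θ ∈ x.support, x θ = 0) : x ∈ Msub S := by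
  have hx : x = ∑ θ ∈ x.support, x θ • (single θ 1 - single 1 1 : Γ →₀ ℤ) := by
    have h1 : x = ∑ θ ∈ x.support, x θ • (single θ 1 : Γ →₀ ℤ) := by
      conv_lhs => rw [← Finsupp.sum_single x]
      rw [Finsupp.sum]
      exact Finset.sum_congr rfl fun θ _ => by rw [Finsupp.smul_single', mul_one]
    calc x = ∑ θ ∈ x.support, x θ • (single θ 1 : Γ →₀ ℤ)
              - (∑ θ ∈ x.support, x θ) • (single 1 1 : Γ →₀ ℤ) := by
            rw [hsum, zero_smul, sub_zero, ← h1]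
      _ = _ := by
            rw [Finset.sum_smul, ← Finset.sum_sub_distrib]
            exact Finset.sum_congr rfl fun θ _ => by rw [smul_sub]
  rw [hx]
  exact sum_mem fun θ hθ => zsmul_mem (single_sub_mem S (hsupp θ hθ)) _

lemma comm_eq (s : Γ) (b : Γ →₀ ℤ) :
    ⁅(SemidirectProduct.inr s : Wreath ℤ Γ),
      (SemidirectProduct.inl (Multiplicative.ofAdd b) : Wreath ℤ Γ)⁆ =
      (SemidirectProduct.inl (Multiplicative.ofAdd (shiftHom ℤ Γ s b - b)) : Wreath ℤ Γ) := by
  have h1 : (SemidirectProduct.inr s : Wreath ℤ Γ)⁻¹ = SemidirectProduct.inr s⁻¹ :=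
    (map_inv _ s).symm
  rw [commutatorElement_def, h1, ← SemidirectProduct.inl_aut, ← map_inv, ← map_mul]
  congr 1
  rw [sub_eq_add_neg, ofAdd_add, ofAdd_neg]
  rfl

end ClAux

namespace ClAux
variable {Γ : Type*} [Group Γ]

lemma key (S : Finset Γ) (x : Γ →₀ ℤ) (a : Γ → (Γ →₀ ℤ))
    (hx : x = ∑ s ∈ S, (shiftHom ℤ Γ s (a s) - a s)) :
    ∃ g v : Fin S.card → Wreath ℤ Γ,
      (∀ i, v i ∈ (SemidirectProduct.inl : Multiplicative (Γ →₀ ℤ) →* Wreath ℤ Γ).range) ∧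
      SemidirectProduct.inl (Multiplicative.ofAdd x) =
        (List.ofFn fun i => ⁅g i, v i⁆).prod := by
  set e : Fin S.card ≃ {y // y ∈ S} := S.equivFin.symm with he
  refine ⟨fun i => SemidirectProduct.inr ((e i : Γ)),
    fun i => SemidirectProduct.inl (Multiplicative.ofAdd (a (e i))),
    fun i => ⟨_, rfl⟩, ?_⟩
  have h1 : (List.ofFn fun i =>
      ⁅(SemidirectProduct.inr ((e i : Γ)) : Wreath ℤ Γ),
        SemidirectProduct.inl (Multiplicative.ofAdd (a (e i)))⁆) =
      List.ofFn fun i => (SemidirectProduct.inl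
        (Multiplicative.ofAdd (shiftHom ℤ Γ (e i : Γ) (a (e i)) - a (e i))) : Wreath ℤ Γ) := by
    exact congrArg List.ofFn (funext fun i => comm_eq _ _)
  rw [h1]
  have h2 : (List.ofFn fun i => (SemidirectProduct.inl
        (Multiplicative.ofAdd (shiftHom ℤ Γ (e i : Γ) (a (e i)) - a (e i))) : Wreath ℤ Γ)) =
      List.map SemidirectProduct.inl (List.ofFn fun i =>
        (Multiplicative.ofAdd (shiftHom ℤ Γ (e i : Γ) (a (e i)) - a (e i)))) := by
    rw [List.map_ofFn]; rfl
  rw [h2, ← map_list_prod, List.prod_ofFn, ← ofAdd_sum]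
  congr 1
  rw [hx]
  rw [← Finset.sum_coe_sort S (fun s => shiftHom ℤ Γ s (a s) - a s)]
  exact (Equiv.sum_comp e fun t => shiftHom ℤ Γ (t : Γ) (a t) - a t).symm

end ClAux

open ClAux in
/-- upper bound for the mixed commutator length in `ℤ ≀ Γ`. -/
theorem clGN_le_rank {Γ : Type*} [Group Γ] (Θ : Subgroup Γ) (hΘ : Θ ≠ ⊥) (hfg : Θ.FG)
    [DecidablePred (· ∈ Θ)] (x : Γ →₀ ℤ)
    (hsupp : (x.support : Set Γ) ⊆ (Θ : Set Γ))
    (hsum : ∑ a ∈ x.support, (if a ∈ Θ then x a else 0) = 0) :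
    SemidirectProduct.inl (Multiplicative.ofAdd x) ∈
      ⁅(⊤ : Subgroup (Wreath ℤ Γ)),
        (SemidirectProduct.inl : Multiplicative (Γ →₀ ℤ) →* Wreath ℤ Γ).range⁆ ∧
    clGN (SemidirectProduct.inl : Multiplicative (Γ →₀ ℤ) →* Wreath ℤ Γ).range
        (SemidirectProduct.inl (Multiplicative.ofAdd x)) ≤ rk Θ := by
  have hsum' : ∑ θ ∈ x.support, x θ = 0 := by
    rw [← hsum]
    exact Finset.sum_congr rfl fun θ hθ => (if_pos (show θ ∈ Θ from hsupp hθ)).symm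
  have key' : ∀ S : Finset Γ, Subgroup.closure (S : Set Γ) = Θ →
      ∃ g v : Fin S.card → Wreath ℤ Γ,
        (∀ i, v i ∈ (SemidirectProduct.inl : Multiplicative (Γ →₀ ℤ) →* Wreath ℤ Γ).range) ∧
        SemidirectProduct.inl (Multiplicative.ofAdd x) =
          (List.ofFn fun i => ⁅g i, v i⁆).prod := by
    intro S hS
    have hmem : x ∈ Msub S := by
      refine mem_Msub S x (fun θ hθ => ?_) hsum'
      rw [hS]; exact hsupp hθ
    obtain ⟨a, ha⟩ := hmem
    exact key S x a ha
  obtain ⟨S₀, hS₀⟩ := hfg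
  obtain ⟨g, v, hv, hprod⟩ := key' S₀ hS₀
  constructor
  · rw [hprod]
    refine Subgroup.list_prod_mem _ fun y hy => ?_
    obtain ⟨i, rfl⟩ := List.mem_ofFn.mp hy
    exact Subgroup.commutator_mem_commutator (Subgroup.mem_top _) (hv i)
  · refine le_sInf fun n hn => ?_
    obtain ⟨S, hS, rfl⟩ := hn
    obtain ⟨g', v', hv', hprod'⟩ := key' S hS
    exact sInf_le ⟨S.card, rfl, g', v', hv', hprod'⟩
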